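/- If f is differentiable with L-Lipschitz gradient and f is convex, then for all x₁, x₂, (∇f(x₁) - ∇f(x₂))·(x₁-x₂) ≥ (1/L)‖∇f(x₁) - ∇f(x₂)‖² (cocoercivity). -/

import Mathlib

open RealInnerProductSpace

variable {E : Type*} [NormedAddCommGroup E] [InnerProductSpace ℝ E] [CompleteSpace E]

-- Lemma A
theorem chordDeriv {f : E → ℝ} (hf : Differentiable ℝ f) (x v : E) (t : ℝ) :
    HasDerivAt (fun s : ℝ => f (x + s • v)) ⟪gradient f (x + t • v), v⟫ t := by
  have hline : HasDerivAt (fun s : ℝ => x + s • v) v t := by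
    simpa using ((hasDerivAt_id t).smul_const v).const_add x
  have hF : HasFDerivAt f (InnerProductSpace.toDual ℝ E (gradient f (x + t • v))) (x + t • v) :=
    ((hf _).hasGradientAt).hasFDerivAt
  simpa [InnerProductSpace.toDual_apply_apply, Function.comp_def] using hF.comp_hasDerivAt t hline

-- continuity of gradient
theorem gradCont {f : E → ℝ} {L : ℝ}
    (hgrad : ∀ x₁ x₂ : E, ‖gradient f x₁ - gradient f x₂‖ ≤ L * ‖x₁ - x₂‖) (hL : 0 < L) :
    Continuous (fun x => gradient f x) := by
  have : LipschitzWith (Real.toNNReal L) (fun x => gradient f x) := by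
    apply LipschitzWith.of_dist_le_mul
    intro x y
    simpa [dist_eq_norm, Real.coe_toNNReal _ hL.le] using hgrad x y
  exact this.continuous

-- Lemma B : descent lemma
theorem descent {f : E → ℝ} {L : ℝ} (hL : 0 < L) (hf : Differentiable ℝ f)
    (hgrad : ∀ x₁ x₂ : E, ‖gradient f x₁ - gradient f x₂‖ ≤ L * ‖x₁ - x₂‖)
    (x v : E) :
    f (x + v) ≤ f x + ⟪gradient f x, v⟫ + L / 2 * ‖v‖ ^ 2 := by
  set G : ℝ → ℝ := fun t => ⟪gradient f (x + t • v), v⟫ with hG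
  have hGc : Continuous G := by
    apply Continuous.inner
    · exact (gradCont hgrad hL).comp (by continuity)
    · exact continuous_const
  have hint : f (x + v) - f x = ∫ t in (0:ℝ)..1, G t := by
    have := intervalIntegral.integral_eq_sub_of_hasDerivAt
      (f := fun s : ℝ => f (x + s • v)) (f' := G)
      (fun t _ => chordDeriv hf x v t) (hGc.intervalIntegrable 0 1)
    simp at this
    linarith [this]
  have hbound : ∫ t in (0:ℝ)..1, G t ≤ ⟪gradient f x, v⟫ + L / 2 * ‖v‖ ^ 2 := by
    have h1 : ∫ t in (0:ℝ)..1, G t ≤ ∫ t in (0:ℝ)..1, (⟪gradient f x, v⟫ + L * t * ‖v‖ ^ 2) := by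
      apply intervalIntegral.integral_mono_on zero_le_one
        (hGc.intervalIntegrable 0 1)
        (by apply Continuous.intervalIntegrable; continuity)
      intro t ht
      have key : G t - ⟪gradient f x, v⟫ ≤ L * t * ‖v‖ ^ 2 := by
        have : G t - ⟪gradient f x, v⟫ = ⟪gradient f (x + t • v) - gradient f x, v⟫ := by
          simp [hG, inner_sub_left]
        rw [this]
        calc ⟪gradient f (x + t • v) - gradient f x, v⟫
            ≤ ‖gradient f (x + t • v) - gradient f x‖ * ‖v‖ := real_inner_le_norm _ _
          _ ≤ (L * ‖(x + t • v) - x‖) * ‖v‖ := by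
              apply mul_le_mul_of_nonneg_right (hgrad _ _) (norm_nonneg v)
          _ = L * t * ‖v‖ ^ 2 := by
              simp [norm_smul, abs_of_nonneg ht.1]; ring
      linarith
    have h2 : ∫ t in (0:ℝ)..1, (⟪gradient f x, v⟫ + L * t * ‖v‖ ^ 2)
        = ⟪gradient f x, v⟫ + L / 2 * ‖v‖ ^ 2 := by
      rw [intervalIntegral.integral_add (by apply Continuous.intervalIntegrable; continuity)
        (by apply Continuous.intervalIntegrable; continuity)]
      simp [mul_comm, mul_assoc, intervalIntegral.integral_const_mul]
      ring_nf
    linarith [h1, h2.le, h2.ge]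
  linarith

-- Lemma C : first-order convexity condition
theorem firstOrder {f : E → ℝ} (hf : Differentiable ℝ f) (hconv : ConvexOn ℝ Set.univ f)
    (x y : E) : f x + ⟪gradient f x, y - x⟫ ≤ f y := by
  set g : ℝ → ℝ := fun t => f (x + t • (y - x)) with hg
  have hgconv : ConvexOn ℝ Set.univ g := by
    have := hconv.comp_affineMap (AffineMap.lineMap x y : ℝ →ᵃ[ℝ] E)
    have hgeq : g = f ∘ (AffineMap.lineMap x y : ℝ →ᵃ[ℝ] E) := by
      ext t
      simp [hg, AffineMap.lineMap_apply, add_comm]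
    rw [hgeq]
    exact this.subset (Set.subset_univ _) (convex_univ)
  have hderiv : HasDerivAt g ⟪gradient f x, y - x⟫ 0 := by
    simpa using chordDeriv hf x (y - x) 0
  have := hgconv.le_slope_of_hasDerivAt (Set.mem_univ (0:ℝ)) (Set.mem_univ (1:ℝ))
    one_pos hderiv
  have hs : slope g 0 1 = f y - f x := by
    simp [slope_def_field, hg]
  rw [hs] at this
  linarith

-- Lemma D : key one-sided bound
theorem keybound {f : E → ℝ} {L : ℝ} (hL : 0 < L) (hf : Differentiable ℝ f)
    (hconv : ConvexOn ℝ Set.univ f)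
    (hgrad : ∀ x₁ x₂ : E, ‖gradient f x₁ - gradient f x₂‖ ≤ L * ‖x₁ - x₂‖)
    (x₁ x₂ : E) :
    f x₁ + ⟪gradient f x₁, x₂ - x₁⟫ + 1 / (2 * L) * ‖gradient f x₂ - gradient f x₁‖ ^ 2
      ≤ f x₂ := by
  set g₁ := gradient f x₁
  set g₂ := gradient f x₂
  set v : E := -((1 / L) • (g₂ - g₁)) with hv
  have hB := descent hL hf hgrad x₂ v
  have hC := firstOrder hf hconv x₁ (x₂ + v)
  have e1 : ⟪g₂, v⟫ = -(1 / L) * ⟪g₂, g₂ - g₁⟫ := by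
    simp [hv, inner_neg_right, inner_smul_right]
  have e2 : ‖v‖ ^ 2 = (1 / L) ^ 2 * ‖g₂ - g₁‖ ^ 2 := by
    rw [hv, norm_neg, norm_smul]
    rw [Real.norm_eq_abs, abs_of_pos (by positivity : (0:ℝ) < 1 / L)]
    ring
  have e3 : ⟪g₁, (x₂ + v) - x₁⟫
      = ⟪g₁, x₂ - x₁⟫ - (1 / L) * ⟪g₁, g₂ - g₁⟫ := by
    have : (x₂ + v) - x₁ = (x₂ - x₁) + v := by abel
    rw [this, inner_add_right, hv, inner_neg_right, inner_smul_right]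
    ring
  have e4 : ⟪g₂, g₂ - g₁⟫ - ⟪g₁, g₂ - g₁⟫ = ‖g₂ - g₁‖ ^ 2 := by
    rw [← inner_sub_left, real_inner_self_eq_norm_sq]
  rw [e3] at hC
  rw [e1, e2] at hB
  have hLne : L ≠ 0 := ne_of_gt hL
  have : f x₁ + ⟪g₁, x₂ - x₁⟫ - (1/L) * ⟪g₁, g₂ - g₁⟫
      ≤ f x₂ + (-(1/L) * ⟪g₂, g₂ - g₁⟫) + L / 2 * ((1/L)^2 * ‖g₂ - g₁‖^2) := by linarith
  have h5 : L / 2 * ((1/L)^2 * ‖g₂ - g₁‖^2) = 1/(2*L) * ‖g₂ - g₁‖^2 := by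
    field_simp
  have h6 : (1/L) * ⟪g₂, g₂ - g₁⟫ - (1/L) * ⟪g₁, g₂ - g₁⟫ = (1/L) * ‖g₂ - g₁‖^2 := by
    rw [← mul_sub, e4]
  have h7 : (1/L) * ‖g₂ - g₁‖^2 = 2 * (1/(2*L) * ‖g₂ - g₁‖^2) := by
    field_simp
  linarith

theorem stmt_17 (n : ℕ) (f : EuclideanSpace ℝ (Fin n) → ℝ) (L : ℝ) (hL : 0 < L)
    (hf : Differentiable ℝ f) (hconv : ConvexOn ℝ Set.univ f)
    (hgrad : ∀ x₁ x₂ : EuclideanSpace ℝ (Fin n),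
      ‖gradient f x₁ - gradient f x₂‖ ≤ L * ‖x₁ - x₂‖) :
    ∀ x₁ x₂ : EuclideanSpace ℝ (Fin n),
      (1 / L) * ‖gradient f x₁ - gradient f x₂‖ ^ 2 ≤
        ⟪gradient f x₁ - gradient f x₂, x₁ - x₂⟫ := by
  intro x₁ x₂
  have h1 := keybound hL hf hconv hgrad x₁ x₂
  have h2 := keybound hL hf hconv hgrad x₂ x₁
  set g₁ := gradient f x₁
  set g₂ := gradient f x₂
  rw [show ‖g₁ - g₂‖ = ‖g₂ - g₁‖ from norm_sub_rev _ _] at h2 ⊢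
  have e1 : ⟪g₁ - g₂, x₁ - x₂⟫ = -⟪g₁, x₂ - x₁⟫ - ⟪g₂, x₁ - x₂⟫ := by
    simp [inner_sub_left, inner_sub_right]
    ring
  have h7 : (1/L) * ‖g₂ - g₁‖^2 = 2 * (1/(2*L) * ‖g₂ - g₁‖^2) := by
    field_simp
  rw [e1]
  linarith
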